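/- Fix an observation sequence ỹ = a₁ỹ₁ ∈ Σⁿ (n ≥ 1) and an ε-transition 𝗍 = (s, ε, s'). Define C^{ỹ}_{s₀,𝗍} = ∑_{z̃ ∈ Ωⁿ_{s₀}, Y(z̃) = ỹ} X_𝗍(z̃) · Pⁿ_{s₀}(z̃). Then C^{ε}_{s₀,𝗍} = 0 and C^{ỹ}_{s₀,𝗍} = ∑_{s₁ ∈ S} δ(s₀)(a₁, s₁) · C^{ỹ₁}_{s₁,𝗍} + ∑_{s₁ ∈ S} δ(s₀)(ε, s₁) · C^{ỹ}_{s₁,𝗍} + [s₀ = s] · δ(s)(ε, s') · P_{s'}(Y = ỹ), where [b] = 1 if b holds and 0 otherwise. -/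

import Mathlib

open scoped ENNReal

/-- A Hidden Markov Model with ε-transitions: a finite state space `S`, a finite
alphabet `A`, and for each state a probability function on `(Σ ∪ {ε}) × S`,
where `ε` is modelled by `none`. -/
structure HMMeps (S A : Type*) [Fintype S] [Fintype A] where
  δ : S → Option A × S → ℝ≥0∞
  sum_one : ∀ s : S, ∑ p : Option A × S, δ s p = 1

namespace HMMeps

variable {S A : Type*} [Fintype S] [Fintype A]

/-- The probability of an alternating sequence `s₀ a₁ s₁ … a_m s_m`, represented by
its start state `s₀` together with the list of steps `[(a₁,s₁),…,(a_m,s_m)]`: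
the product of the transition probabilities. -/
noncomputable def pathProb (M : HMMeps S A) : S → List (Option A × S) → ℝ≥0∞
  | _, [] => 1
  | s, p :: rest => M.δ s p * M.pathProb p.2 rest

/-- The observable projection `Y`: the sequence of observable symbols
(ε's and states removed). -/
def obsSeq (z : List (Option A × S)) : List A := z.filterMap Prod.fst

/-- The last state `L` of a sequence starting in `s₀`. -/
def lastState (s₀ : S) (z : List (Option A × S)) : S :=
  (z.getLast?.map Prod.snd).getD s₀

/-- The sample space `Ωⁿ_{s₀} = s₀((εS)*ΣS)ⁿ`: alternating sequences containing
exactly `n` observable symbols whose second-to-last element (i.e. the symbol of the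
last transition) is observable.  (The start state is kept separately, so an element
of the sample space is just the list of steps.) -/
def Omega (S A : Type*) (n : ℕ) : Set (List (Option A × S)) :=
  {z | (obsSeq z).length = n ∧ ∀ p ∈ z.getLast?, (Prod.fst p).isSome = true}

end HMMeps

namespace HMMeps

/-- `P_{s₀}(Y = ỹ)`: the probability of observing `ỹ` starting from `s₀`. -/
noncomputable def Pobs {S A : Type*} [Fintype S] [Fintype A]
    (M : HMMeps S A) (s₀ : S) (ys : List A) : ℝ≥0∞ :=
  ∑' z : {z : List (Option A × S) // z ∈ Omega S A ys.length ∧ obsSeq z = ys},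
    M.pathProb s₀ z.1

/-- `X_𝗍`: the number of occurrences of the transition `𝗍 = (s, a, s')` in the
sequence starting in the given state with the given list of steps. -/
def countTrans {S A : Type*} [DecidableEq S] [DecidableEq A]
    (t : S × (Option A × S)) : S → List (Option A × S) → ℕ
  | _, [] => 0
  | s, p :: rest => (if (s, p) = t then 1 else 0) + countTrans t p.2 rest

/-- `C^{ỹ}_{s₀,𝗍} = ∑_{z̃ ∈ Ωⁿ_{s₀}, Y(z̃)=ỹ} X_𝗍(z̃)·Pⁿ_{s₀}(z̃)`
(equivalently `E_{s₀}[X_𝗍 ∣ Y=ỹ]·P_{s₀}(Y=ỹ)` when `P_{s₀}(Y=ỹ) > 0`). -/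
noncomputable def Cexp {S A : Type*} [Fintype S] [Fintype A]
    [DecidableEq S] [DecidableEq A]
    (M : HMMeps S A) (s₀ : S) (ys : List A) (t : S × (Option A × S)) : ℝ≥0∞ :=
  ∑' z : {z : List (Option A × S) // z ∈ Omega S A ys.length ∧ obsSeq z = ys},
    (countTrans t s₀ z.1 : ℝ≥0∞) * M.pathProb s₀ z.1

section Aux

lemma etsum_sum_type {α β : Type u} (f : α ⊕ β → ℝ≥0∞) :
    ∑' x, f x = (∑' a, f (Sum.inl a)) + ∑' b, f (Sum.inr b) := by
  rw [← (Equiv.sumEquivSigmaBool α β).symm.tsum_eq f, ENNReal.tsum_sigma', tsum_fintype]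
  rw [Fintype.sum_bool]
  have h1 : ∀ b : β, (Equiv.sumEquivSigmaBool α β).symm ⟨true, b⟩ = Sum.inr b := fun _ => rfl
  have h2 : ∀ a : α, (Equiv.sumEquivSigmaBool α β).symm ⟨false, a⟩ = Sum.inl a := fun _ => rfl
  simp only [h1, h2]
  exact add_comm _ _

variable {S A : Type*} [Fintype S] [Fintype A]

lemma obsSeq_cons (p : Option A × S) (rest : List (Option A × S)) :
    obsSeq (p :: rest) = match p.1 with
      | some a => a :: obsSeq rest
      | none => obsSeq rest := by
  cases p with
  | mk b s => cases b <;> simp [obsSeq, List.filterMap_cons]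

lemma eq_nil_of_mem_omega {z : List (Option A × S)}
    (hz : z ∈ Omega S A 0) (hob : obsSeq z = []) : z = [] := by
  cases z with
  | nil => rfl
  | cons p rest =>
    exfalso
    have hlast := hz.2
    have : ∀ q ∈ (p :: rest), (Prod.fst q).isSome ≠ true ∨ True := fun _ _ => Or.inr trivial
    -- all entries have first component none, since obsSeq = []
    have hall : ∀ q ∈ (p :: rest), Prod.fst q = none := by
      intro q hq
      by_contra hne
      obtain ⟨a, ha⟩ := Option.ne_none_iff_exists'.mp hne
      have : a ∈ obsSeq (p :: rest) := by
        simp only [obsSeq, List.mem_filterMap]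
        exact ⟨q, hq, ha⟩
      rw [hob] at this
      exact (List.not_mem_nil) this
    obtain ⟨q, hq⟩ : ∃ q, (p :: rest).getLast? = some q := ⟨(p::rest).getLast (by simp), List.getLast?_eq_getLast _⟩
    have hq1 := hlast q (by rw [hq]; rfl)
    have hqm : q ∈ p :: rest := List.mem_of_mem_getLast? (by rw [hq]; rfl)
    rw [hall q hqm] at hq1
    simp at hq1

lemma char_cons {a₁ : A} {y₁ : List A} {z : List (Option A × S)}
    (hz : z ∈ Omega S A (a₁ :: y₁).length) (hob : obsSeq z = a₁ :: y₁) :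
    (∃ s₁ rest, z = (some a₁, s₁) :: rest ∧ rest ∈ Omega S A y₁.length ∧ obsSeq rest = y₁) ∨
    (∃ s₁ rest, z = (none, s₁) :: rest ∧ rest ∈ Omega S A (a₁ :: y₁).length ∧
      obsSeq rest = a₁ :: y₁) := by
  cases z with
  | nil => simp [obsSeq] at hob
  | cons p rest =>
    obtain ⟨b, s₁⟩ := p
    have hlast := hz.2
    cases b with
    | some a =>
      left
      have hob' : a :: obsSeq rest = a₁ :: y₁ := by
        simpa [obsSeq_cons] using hob
      obtain ⟨rfl, hrest⟩ : a = a₁ ∧ obsSeq rest = y₁ := by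
        exact ⟨(List.cons_eq_cons.mp hob').1, (List.cons_eq_cons.mp hob').2⟩
      refine ⟨s₁, rest, rfl, ⟨by rw [hrest], ?_⟩, hrest⟩
      intro q hq
      cases rest with
      | nil => simp at hq
      | cons r rs =>
        exact hlast q (by rwa [List.getLast?_cons_cons])
    | none =>
      right
      have hrest : obsSeq rest = a₁ :: y₁ := by simpa [obsSeq_cons] using hob
      refine ⟨s₁, rest, rfl, ⟨by rw [hrest], ?_⟩, hrest⟩
      intro q hq
      cases rest with
      | nil => simp [obsSeq] at hrest
      | cons r rs =>
        exact hlast q (by rwa [List.getLast?_cons_cons])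

lemma mem_omega_cons_some {a₁ : A} {y₁ : List A} {s₁ : S} {rest : List (Option A × S)}
    (h : rest ∈ Omega S A y₁.length) (hob : obsSeq rest = y₁) :
    ((some a₁, s₁) :: rest) ∈ Omega S A (a₁ :: y₁).length ∧
      obsSeq ((some a₁, s₁) :: rest) = a₁ :: y₁ := by
  have hobs : obsSeq ((some a₁, s₁) :: rest) = a₁ :: obsSeq rest := by
    simp [obsSeq_cons]
  refine ⟨⟨by simp [hobs, hob], ?_⟩, by rw [hobs, hob]⟩
  intro q hq
  cases rest with
  | nil =>
    simp only [List.getLast?_singleton, Option.mem_def, Option.some.injEq] at hq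
    subst hq
    rfl
  | cons r rs =>
    rw [List.getLast?_cons_cons] at hq
    exact h.2 q hq

lemma mem_omega_cons_none {a₁ : A} {y₁ : List A} {s₁ : S} {rest : List (Option A × S)}
    (h : rest ∈ Omega S A (a₁ :: y₁).length) (hob : obsSeq rest = a₁ :: y₁) :
    ((none, s₁) :: rest) ∈ Omega S A (a₁ :: y₁).length ∧
      obsSeq ((none, s₁) :: rest) = a₁ :: y₁ := by
  have hobs : obsSeq ((none, s₁) :: rest) = obsSeq rest := by
    simp [obsSeq_cons]
  have hne : rest ≠ [] := by
    intro hnil; rw [hnil] at hob; simp [obsSeq] at hob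
  refine ⟨⟨by simp [hobs, hob], ?_⟩, by rw [hobs, hob]⟩
  intro q hq
  cases rest with
  | nil => exact absurd rfl hne
  | cons r rs =>
    rw [List.getLast?_cons_cons] at hq
    exact h.2 q hq

/-- Decomposition map: a path observing `a₁ :: y₁` splits by its first step. -/
def splitMap (a₁ : A) (y₁ : List A) :
    ((Σ _ : S, {z : List (Option A × S) // z ∈ Omega S A y₁.length ∧ obsSeq z = y₁}) ⊕
     (Σ _ : S, {z : List (Option A × S) // z ∈ Omega S A (a₁ :: y₁).length ∧
        obsSeq z = a₁ :: y₁})) →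
    {z : List (Option A × S) // z ∈ Omega S A (a₁ :: y₁).length ∧ obsSeq z = a₁ :: y₁}
  | Sum.inl ⟨s₁, rest, h⟩ => ⟨(some a₁, s₁) :: rest, mem_omega_cons_some h.1 h.2⟩
  | Sum.inr ⟨s₁, rest, h⟩ => ⟨(none, s₁) :: rest, mem_omega_cons_none h.1 h.2⟩

@[simp] lemma splitMap_inl (a₁ : A) (y₁ : List A) (s₁ : S)
    (r : {z : List (Option A × S) // z ∈ Omega S A y₁.length ∧ obsSeq z = y₁}) :
    (splitMap a₁ y₁ (Sum.inl ⟨s₁, r⟩)).1 = (some a₁, s₁) :: r.1 := rfl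

@[simp] lemma splitMap_inr (a₁ : A) (y₁ : List A) (s₁ : S)
    (r : {z : List (Option A × S) // z ∈ Omega S A (a₁ :: y₁).length ∧
        obsSeq z = a₁ :: y₁}) :
    (splitMap a₁ y₁ (Sum.inr ⟨s₁, r⟩)).1 = (none, s₁) :: r.1 := rfl

lemma splitMap_bijective (a₁ : A) (y₁ : List A) :
    Function.Bijective (splitMap (S := S) a₁ y₁) := by
  constructor
  · rintro (⟨s₁, r₁, h₁⟩ | ⟨s₁, r₁, h₁⟩) (⟨s₂, r₂, h₂⟩ | ⟨s₂, r₂, h₂⟩) h <;>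
      simp only [splitMap, Subtype.mk.injEq, List.cons.injEq, Prod.mk.injEq] at h
    · obtain ⟨⟨-, rfl⟩, rfl⟩ := h; rfl
    · exact absurd h.1.1 (by simp)
    · exact absurd h.1.1 (by simp)
    · obtain ⟨⟨-, rfl⟩, rfl⟩ := h; rfl
  · rintro ⟨z, hz, hob⟩
    rcases char_cons hz hob with ⟨s₁, rest, rfl, h1, h2⟩ | ⟨s₁, rest, rfl, h1, h2⟩
    · exact ⟨Sum.inl ⟨s₁, rest, h1, h2⟩, rfl⟩
    · exact ⟨Sum.inr ⟨s₁, rest, h1, h2⟩, rfl⟩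

end Aux

/-- For an ε-transition `𝗍 = (s, ε, s')`:
`C^{ε}_{s₀,𝗍} = 0` and, for `ỹ = a₁ỹ₁`,
`C^{ỹ}_{s₀,𝗍} = ∑_{s₁} δ(s₀)(a₁,s₁)·C^{ỹ₁}_{s₁,𝗍} + ∑_{s₁} δ(s₀)(ε,s₁)·C^{ỹ}_{s₁,𝗍}
 + [s₀=s]·δ(s)(ε,s')·P_{s'}(Y=ỹ)`. -/
theorem Cexp_recursion_eps {S A : Type*} [Fintype S] [Fintype A]
    [DecidableEq S] [DecidableEq A]
    (M : HMMeps S A) (s₀ : S) (a₁ : A) (y₁ : List A) (s s' : S) :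
    Cexp M s₀ [] (s, (none, s')) = 0 ∧
    Cexp M s₀ (a₁ :: y₁) (s, (none, s'))
      = (∑ s₁ : S, M.δ s₀ (some a₁, s₁) * Cexp M s₁ y₁ (s, (none, s')))
        + (∑ s₁ : S, M.δ s₀ (none, s₁) * Cexp M s₁ (a₁ :: y₁) (s, (none, s')))
        + (if s₀ = s then 1 else 0) * M.δ s (none, s') * Pobs M s' (a₁ :: y₁) := by
  classical
  constructor
  · rw [Cexp, ENNReal.tsum_eq_zero]
    rintro ⟨z, hz, hob⟩
    have hzn : z = [] := eq_nil_of_mem_omega hz hob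
    subst hzn
    simp [countTrans]
  · have key := (Equiv.ofBijective _ (splitMap_bijective (S := S) a₁ y₁)).tsum_eq
      (fun z : {z : List (Option A × S) // z ∈ Omega S A (a₁ :: y₁).length ∧
          obsSeq z = a₁ :: y₁} =>
        (countTrans (s, (none, s')) s₀ z.1 : ℝ≥0∞) * M.pathProb s₀ z.1)
    rw [Cexp, ← key, etsum_sum_type]
    clear key
    simp only [Equiv.ofBijective_apply]
    have hleft :
        (∑' w : (Σ _ : S, {z : List (Option A × S) // z ∈ Omega S A y₁.length ∧
            obsSeq z = y₁}),
          (countTrans (s, (none, s')) s₀ (splitMap a₁ y₁ (Sum.inl w)).1 : ℝ≥0∞) *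
            M.pathProb s₀ (splitMap a₁ y₁ (Sum.inl w)).1)
        = ∑ s₁ : S, M.δ s₀ (some a₁, s₁) * Cexp M s₁ y₁ (s, (none, s')) := by
      rw [ENNReal.tsum_sigma'
        (f := fun w : (Σ _ : S, {z : List (Option A × S) // z ∈ Omega S A y₁.length ∧
            obsSeq z = y₁}) =>
          (countTrans (s, (none, s')) s₀ (splitMap a₁ y₁ (Sum.inl w)).1 : ℝ≥0∞) *
            M.pathProb s₀ (splitMap a₁ y₁ (Sum.inl w)).1), tsum_fintype]
      refine Finset.sum_congr rfl fun s₁ _ => ?_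
      have hpt : ∀ r : {z : List (Option A × S) // z ∈ Omega S A y₁.length ∧ obsSeq z = y₁},
          (countTrans (s, (none, s')) s₀ ((some a₁, s₁) :: r.1) : ℝ≥0∞) *
            M.pathProb s₀ ((some a₁, s₁) :: r.1)
          = M.δ s₀ (some a₁, s₁) *
            ((countTrans (s, (none, s')) s₁ r.1 : ℝ≥0∞) * M.pathProb s₁ r.1) := by
        intro r
        have hc : countTrans (s, (none, s')) s₀ ((some a₁, s₁) :: r.1)
            = countTrans (s, (none, s')) s₁ r.1 := by
          simp [countTrans]
        have hp : M.pathProb s₀ ((some a₁, s₁) :: r.1)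
            = M.δ s₀ (some a₁, s₁) * M.pathProb s₁ r.1 := rfl
        rw [hc, hp]; ring
      calc (∑' r : {z : List (Option A × S) // z ∈ Omega S A y₁.length ∧ obsSeq z = y₁},
              (countTrans (s, (none, s')) s₀ (splitMap a₁ y₁ (Sum.inl ⟨s₁, r⟩)).1 : ℝ≥0∞) *
                M.pathProb s₀ (splitMap a₁ y₁ (Sum.inl ⟨s₁, r⟩)).1)
          = ∑' r : {z : List (Option A × S) // z ∈ Omega S A y₁.length ∧ obsSeq z = y₁},
              M.δ s₀ (some a₁, s₁) *
                ((countTrans (s, (none, s')) s₁ r.1 : ℝ≥0∞) * M.pathProb s₁ r.1) := by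
            refine tsum_congr fun r => ?_
            rw [splitMap_inl]
            exact hpt r
        _ = M.δ s₀ (some a₁, s₁) * Cexp M s₁ y₁ (s, (none, s')) := by
            rw [ENNReal.tsum_mul_left, Cexp]
    have hright :
        (∑' w : (Σ _ : S, {z : List (Option A × S) // z ∈ Omega S A (a₁ :: y₁).length ∧
            obsSeq z = a₁ :: y₁}),
          (countTrans (s, (none, s')) s₀ (splitMap a₁ y₁ (Sum.inr w)).1 : ℝ≥0∞) *
            M.pathProb s₀ (splitMap a₁ y₁ (Sum.inr w)).1)
        = (∑ s₁ : S, M.δ s₀ (none, s₁) * Cexp M s₁ (a₁ :: y₁) (s, (none, s')))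
          + (if s₀ = s then 1 else 0) * M.δ s (none, s') * Pobs M s' (a₁ :: y₁) := by
      rw [ENNReal.tsum_sigma'
        (f := fun w : (Σ _ : S, {z : List (Option A × S) // z ∈ Omega S A (a₁ :: y₁).length ∧
            obsSeq z = a₁ :: y₁}) =>
          (countTrans (s, (none, s')) s₀ (splitMap a₁ y₁ (Sum.inr w)).1 : ℝ≥0∞) *
            M.pathProb s₀ (splitMap a₁ y₁ (Sum.inr w)).1), tsum_fintype]
      have hpt : ∀ (s₁ : S)
          (r : {z : List (Option A × S) // z ∈ Omega S A (a₁ :: y₁).length ∧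
            obsSeq z = a₁ :: y₁}),
          (countTrans (s, (none, s')) s₀ ((none, s₁) :: r.1) : ℝ≥0∞) *
            M.pathProb s₀ ((none, s₁) :: r.1)
          = (if s₀ = s ∧ s₁ = s' then 1 else 0) * M.δ s₀ (none, s₁) * M.pathProb s₁ r.1
            + M.δ s₀ (none, s₁) *
              ((countTrans (s, (none, s')) s₁ r.1 : ℝ≥0∞) * M.pathProb s₁ r.1) := by
        intro s₁ r
        have hc : (countTrans (s, (none, s')) s₀ ((none, s₁) :: r.1) : ℝ≥0∞)
            = (if s₀ = s ∧ s₁ = s' then 1 else 0)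
              + (countTrans (s, (none, s')) s₁ r.1 : ℝ≥0∞) := by
          simp only [countTrans, Nat.cast_add]
          congr 1
          by_cases h : s₀ = s ∧ s₁ = s' <;>
            simp [Prod.ext_iff, h, and_comm, and_assoc] <;> tauto
        have hp : M.pathProb s₀ ((none, s₁) :: r.1)
            = M.δ s₀ (none, s₁) * M.pathProb s₁ r.1 := rfl
        rw [hc, hp]; ring
      have hinner : ∀ s₁ : S,
          (∑' r : {z : List (Option A × S) // z ∈ Omega S A (a₁ :: y₁).length ∧
              obsSeq z = a₁ :: y₁},
            (countTrans (s, (none, s')) s₀ (splitMap a₁ y₁ (Sum.inr ⟨s₁, r⟩)).1 : ℝ≥0∞) *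
              M.pathProb s₀ (splitMap a₁ y₁ (Sum.inr ⟨s₁, r⟩)).1)
          = (if s₀ = s ∧ s₁ = s' then 1 else 0) * M.δ s₀ (none, s₁) *
              Pobs M s₁ (a₁ :: y₁)
            + M.δ s₀ (none, s₁) * Cexp M s₁ (a₁ :: y₁) (s, (none, s')) := by
        intro s₁
        calc (∑' r : {z : List (Option A × S) // z ∈ Omega S A (a₁ :: y₁).length ∧
                obsSeq z = a₁ :: y₁},
              (countTrans (s, (none, s')) s₀ (splitMap a₁ y₁ (Sum.inr ⟨s₁, r⟩)).1 : ℝ≥0∞) *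
                M.pathProb s₀ (splitMap a₁ y₁ (Sum.inr ⟨s₁, r⟩)).1)
            = ∑' r : {z : List (Option A × S) // z ∈ Omega S A (a₁ :: y₁).length ∧
                obsSeq z = a₁ :: y₁},
              ((if s₀ = s ∧ s₁ = s' then 1 else 0) * M.δ s₀ (none, s₁) * M.pathProb s₁ r.1
                + M.δ s₀ (none, s₁) *
                  ((countTrans (s, (none, s')) s₁ r.1 : ℝ≥0∞) * M.pathProb s₁ r.1)) := by
              refine tsum_congr fun r => ?_
              rw [splitMap_inr]
              exact hpt s₁ r
          _ = (if s₀ = s ∧ s₁ = s' then 1 else 0) * M.δ s₀ (none, s₁) *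
                Pobs M s₁ (a₁ :: y₁)
              + M.δ s₀ (none, s₁) * Cexp M s₁ (a₁ :: y₁) (s, (none, s')) := by
              rw [ENNReal.tsum_add]
              congr 1
              · simp only [mul_assoc, Pobs]
                rw [← ENNReal.tsum_mul_left, ← ENNReal.tsum_mul_left]
              · rw [ENNReal.tsum_mul_left, Cexp]
      calc (∑ s₁ : S,
            ∑' r : {z : List (Option A × S) // z ∈ Omega S A (a₁ :: y₁).length ∧
                obsSeq z = a₁ :: y₁},
              (countTrans (s, (none, s')) s₀ (splitMap a₁ y₁ (Sum.inr ⟨s₁, r⟩)).1 : ℝ≥0∞) *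
                M.pathProb s₀ (splitMap a₁ y₁ (Sum.inr ⟨s₁, r⟩)).1)
          = ∑ s₁ : S,
              ((if s₀ = s ∧ s₁ = s' then 1 else 0) * M.δ s₀ (none, s₁) *
                  Pobs M s₁ (a₁ :: y₁)
                + M.δ s₀ (none, s₁) * Cexp M s₁ (a₁ :: y₁) (s, (none, s'))) :=
            Finset.sum_congr rfl fun s₁ _ => hinner s₁
        _ = (∑ s₁ : S, (if s₀ = s ∧ s₁ = s' then 1 else 0) * M.δ s₀ (none, s₁) *
                Pobs M s₁ (a₁ :: y₁))
            + ∑ s₁ : S, M.δ s₀ (none, s₁) * Cexp M s₁ (a₁ :: y₁) (s, (none, s')) :=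
            Finset.sum_add_distrib
        _ = (∑ s₁ : S, M.δ s₀ (none, s₁) * Cexp M s₁ (a₁ :: y₁) (s, (none, s')))
            + (if s₀ = s then 1 else 0) * M.δ s (none, s') * Pobs M s' (a₁ :: y₁) := by
            rw [add_comm]
            congr 1
            by_cases h : s₀ = s
            · subst h
              rw [if_pos rfl, one_mul]
              rw [Finset.sum_eq_single s']
              · simp
              · intro b _ hb; simp [hb]
              · intro hb; exact absurd (Finset.mem_univ s') hb
            · simp [h]
    rw [hleft, hright, add_assoc]

end HMMeps
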